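/- Let (G,τ) be a topological abelian group and φ: (G,τ) → (G,τ) a topological automorphism. Then ent*_τ(φ) = ent*_τ(φ⁻¹). -/

import Mathlib

open Filter Topology ENNReal

variable {G : Type*} [AddCommGroup G]

/-- `B_n(φ,N) = N ∩ φ⁻¹(N) ∩ … ∩ φ^{-(n-1)}(N)`. -/
noncomputable def Bsub (φ : AddMonoid.End G) (N : AddSubgroup G) (n : ℕ) : AddSubgroup G :=
  ⨅ i ∈ Finset.range n, N.comap (φ ^ i : AddMonoid.End G)

/-- `H*(φ,N) = lim_n log|G/B_n(φ,N)|/n`. -/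
noncomputable def Hstar (φ : AddMonoid.End G) (N : AddSubgroup G) : ℝ :=
  limUnder atTop fun n : ℕ => Real.log ((Bsub φ N n).index) / n

/-- The topological adjoint entropy: sup of `H*(φ,N)` over `τ`-open finite-index subgroups. -/
noncomputable def entStar (t : TopologicalSpace G) (φ : AddMonoid.End G) : ℝ≥0∞ :=
  ⨆ (N : AddSubgroup G) (_ : @IsOpen G t ↑N ∧ N.FiniteIndex), ENNReal.ofReal (Hstar φ N)

def toEnd (f : G ≃+ G) : AddMonoid.End G := f.toAddMonoidHom

lemma mem_Bsub (φ : AddMonoid.End G) (N : AddSubgroup G) (n : ℕ) (x : G) :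
    x ∈ Bsub φ N n ↔ ∀ i < n, (φ : G → G)^[i] x ∈ N := by
  simp [Bsub, AddSubgroup.mem_iInf, AddSubgroup.mem_comap, Finset.mem_range,
    ← AddMonoid.End.coe_pow]
  exact Iff.rfl

lemma cancel_iter (φ : G ≃+ G) (i m : ℕ) (x : G) :
    (φ : G → G)^[i] ((φ.symm : G → G)^[i + m] x) = (φ.symm : G → G)^[m] x := by
  induction i with
  | zero => simp
  | succ k ih =>
    rw [Function.iterate_succ_apply, show k + 1 + m = (k + m) + 1 by ring,
      Function.iterate_succ_apply']
    simp [ih]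

lemma coe_end_pow (f : G ≃+ G) (m : ℕ) :
    ((toEnd f ^ m : AddMonoid.End G) : G → G) = (f : G → G)^[m] := by
  rw [AddMonoid.End.coe_pow]; rfl

lemma Bsub_symm (φ : G ≃+ G) (N : AddSubgroup G) (m : ℕ) :
    Bsub (toEnd φ.symm) N (m + 1)
      = (Bsub (toEnd φ) N (m + 1)).comap (toEnd φ.symm ^ m : AddMonoid.End G) := by
  ext x
  show x ∈ Bsub _ N (m + 1) ↔ (toEnd φ.symm ^ m : AddMonoid.End G) x ∈ Bsub (toEnd φ) N (m + 1)
  rw [mem_Bsub, mem_Bsub]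
  have hcoe : ((toEnd φ.symm ^ m : AddMonoid.End G) x) = (φ.symm : G → G)^[m] x := by
    rw [coe_end_pow]
  rw [hcoe]
  have hc : ((toEnd φ : AddMonoid.End G) : G → G) = (φ : G → G) := rfl
  have hc' : ((toEnd φ.symm : AddMonoid.End G) : G → G) = (φ.symm : G → G) := rfl
  rw [hc, hc']
  have key : ∀ i ≤ m, (φ : G → G)^[i] ((φ.symm : G → G)^[m] x)
      = (φ.symm : G → G)^[m - i] x := by
    intro i hi
    have h2 : m = i + (m - i) := by omega
    rw [h2, cancel_iter]
    congr 1
    omega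
  constructor
  · intro h i hi
    rw [key i (by omega)]
    exact h _ (by omega)
  · intro h j hj
    have := h (m - j) (by omega)
    rw [key (m - j) (by omega)] at this
    rwa [show m - (m - j) = j by omega] at this

lemma index_Bsub_symm (φ : G ≃+ G) (N : AddSubgroup G) (n : ℕ) :
    (Bsub (toEnd φ.symm) N n).index = (Bsub (toEnd φ) N n).index := by
  cases n with
  | zero => simp [Bsub]
  | succ m =>
    rw [Bsub_symm]
    apply AddSubgroup.index_comap_of_surjective
    intro y
    refine ⟨(φ : G → G)^[m] y, ?_⟩
    show ((toEnd φ.symm ^ m : AddMonoid.End G)) _ = y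
    rw [show ((toEnd φ.symm ^ m : AddMonoid.End G)) ((φ : G → G)^[m] y)
        = (φ.symm : G → G)^[m] ((φ : G → G)^[m] y) by rw [coe_end_pow]]
    simpa using cancel_iter φ.symm m 0 y

lemma Hstar_symm (φ : G ≃+ G) (N : AddSubgroup G) :
    Hstar (toEnd φ.symm) N = Hstar (toEnd φ) N := by
  unfold Hstar
  congr 1
  funext n
  rw [index_Bsub_symm]

theorem stmt5 [TopologicalSpace G] [IsTopologicalAddGroup G]
    (φ : G ≃+ G) (hφ : Continuous φ) (hφ' : Continuous φ.symm) :
    entStar ‹TopologicalSpace G› φ.toAddMonoidHom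
      = entStar ‹TopologicalSpace G› φ.symm.toAddMonoidHom := by
  show entStar ‹TopologicalSpace G› (toEnd φ) = entStar ‹TopologicalSpace G› (toEnd φ.symm)
  unfold entStar
  exact iSup_congr fun N => by rw [Hstar_symm]
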